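/- Let Ψ be a nonzero totally symmetric 4-index spinor over ℂ² and R a complex scalar such that 12 Ψ_{(AD}^{\;BG} Ψ_{EF)BG} = R · Ψ_{ADEF}, where indices are raised with the symplectic form ε. Then Ψ is of Petrov type N or type D, i.e., either Ψ_{ABCD} = λ · o_A o_B o_C o_D for some spinor o and scalar λ (type N), or Ψ_{ABCD} = 6μ · o_{(A} o_B ι_C ι_{D)} for linearly independent spinors o, ι and scalar μ (type D). -/

import Mathlib

open scoped BigOperators

noncomputable section

/-- Components of a covector (one-index spinor) over spin space `S = ℂ²`. -/
abbrev Sp := Fin 2 → ℂ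

/-- A 4-index spinor (all indices of the same 2-dimensional type). -/
abbrev Tensor4 := Fin 2 → Fin 2 → Fin 2 → Fin 2 → ℂ

/-- The symplectic form ε, with ε₀₁ = 1 = -ε₁₀. -/
def eps : Fin 2 → Fin 2 → ℂ := ![![0, 1], ![-1, 0]]

/-- Index raising: `(up α) A = ε^{AB} α_B`. -/
def up (α : Sp) : Sp := fun A => ∑ B, eps A B * α B

/-- The ε-pairing `α_A β^A`. -/
def pair (α β : Sp) : ℂ := ∑ A, α A * up β A

/-- Complex conjugate spinor (components in the conjugate spin space). -/
def conjSp (α : Sp) : Sp := fun A => (starRingEnd ℂ) (α A)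

/-- Total symmetrization of a 4-index spinor (with the 1/4! normalization). -/
def symz (T : Tensor4) : Tensor4 := fun A B C D =>
  (1 / 24 : ℂ) * ∑ σ : Equiv.Perm (Fin 4),
    T (![A, B, C, D] (σ 0)) (![A, B, C, D] (σ 1)) (![A, B, C, D] (σ 2)) (![A, B, C, D] (σ 3))

/-- Symmetrized product `α_{(A} β_B γ_C δ_{D)}` of four one-index spinors. -/
def Sym4 (α β γ δ : Sp) : Tensor4 :=
  symz (fun A B C D => α A * β B * γ C * δ D)

/-- Total symmetry of a 4-index spinor. -/
def TotSym4 (Ψ : Tensor4) : Prop :=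
  ∀ A B C D, Ψ A B C D = Ψ B A C D ∧ Ψ A B C D = Ψ A C B D ∧ Ψ A B C D = Ψ A B D C

/-- The contraction `Ψ_{AD}{}^{BG} Ψ_{EFBG}` (indices raised with ε). -/
def Qc (Ψ : Tensor4) : Tensor4 := fun A D E F =>
  ∑ B, ∑ G, ∑ P, ∑ Q, eps B P * eps G Q * Ψ A D P Q * Ψ E F B G

/- ### Auxiliary lemmas -/

lemma perm_sum_succ {n} (f : Equiv.Perm (Fin (n+1)) → ℂ) :
    ∑ σ, f σ = ∑ p : Fin (n+1) × Equiv.Perm (Fin n), f (Equiv.Perm.decomposeFin.symm p) :=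
  (Equiv.Perm.decomposeFin.symm.sum_comp f).symm

lemma symz_expand (T : Tensor4) (A B C D : Fin 2) :
    symz T A B C D =
    (1/24 : ℂ) * (T A B C D + T A B D C + (T A C B D + T A C D B + (T A D C B + T A D B C)) +
    (T B A C D + T B A D C + (T B C A D + T B C D A + (T B D C A + T B D A C)) +
    (T C B A D + T C B D A + (T C A B D + T C A D B + (T C D A B + T C D B A)) +
    (T D B C A + T D B A C + (T D C B A + T D C A B + (T D A C B + T D A B C)))))) := by
  simp only [symz, perm_sum_succ, Fintype.sum_prod_type, Fin.sum_univ_succ, Fin.sum_univ_zero,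
    Finset.univ_unique, Finset.sum_singleton]
  rfl

lemma Qc_eval (Ψ : Tensor4) (A D E F : Fin 2) :
    Qc Ψ A D E F = Ψ A D 1 1 * Ψ E F 0 0 - Ψ A D 1 0 * Ψ E F 0 1
      - Ψ A D 0 1 * Ψ E F 1 0 + Ψ A D 0 0 * Ψ E F 1 1 := by
  simp only [Qc, eps, Fin.sum_univ_two, Matrix.cons_val_zero, Matrix.cons_val_one,
    Matrix.head_cons]
  ring

lemma s0010 (T : Tensor4) : symz T 0 0 1 0 = symz T 0 0 0 1 := by
  rw [symz_expand, symz_expand]; ring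
lemma s0100 (T : Tensor4) : symz T 0 1 0 0 = symz T 0 0 0 1 := by
  rw [symz_expand, symz_expand]; ring
lemma s1000 (T : Tensor4) : symz T 1 0 0 0 = symz T 0 0 0 1 := by
  rw [symz_expand, symz_expand]; ring
lemma s0101 (T : Tensor4) : symz T 0 1 0 1 = symz T 0 0 1 1 := by
  rw [symz_expand, symz_expand]; ring
lemma s0110 (T : Tensor4) : symz T 0 1 1 0 = symz T 0 0 1 1 := by
  rw [symz_expand, symz_expand]; ring
lemma s1001 (T : Tensor4) : symz T 1 0 0 1 = symz T 0 0 1 1 := by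
  rw [symz_expand, symz_expand]; ring
lemma s1010 (T : Tensor4) : symz T 1 0 1 0 = symz T 0 0 1 1 := by
  rw [symz_expand, symz_expand]; ring
lemma s1100 (T : Tensor4) : symz T 1 1 0 0 = symz T 0 0 1 1 := by
  rw [symz_expand, symz_expand]; ring
lemma s1011 (T : Tensor4) : symz T 1 0 1 1 = symz T 0 1 1 1 := by
  rw [symz_expand, symz_expand]; ring
lemma s1101 (T : Tensor4) : symz T 1 1 0 1 = symz T 0 1 1 1 := by
  rw [symz_expand, symz_expand]; ring
lemma s1110 (T : Tensor4) : symz T 1 1 1 0 = symz T 0 1 1 1 := by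
  rw [symz_expand, symz_expand]; ring

lemma two01 (X : Fin 2) : X = 0 ∨ X = 1 := by omega

set_option maxHeartbeats 1000000 in
/-- a nonzero totally symmetric 4-index spinor satisfying
`12 Ψ_{(AD}{}^{BG} Ψ_{EF)BG} = R Ψ_{ADEF}` is of Petrov type N or type D. -/
theorem eigen_condition_implies_type_N_or_D (Ψ : Tensor4) (R : ℂ)
    (hsym : TotSym4 Ψ) (hne : Ψ ≠ 0)
    (h : ∀ A D E F, 12 * symz (Qc Ψ) A D E F = R * Ψ A D E F) :
    (∃ (o : Sp) (lam : ℂ), ∀ A B C D, Ψ A B C D = lam * (o A * o B * o C * o D)) ∨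
    (∃ (o ι : Sp) (μ : ℂ), LinearIndependent ℂ ![o, ι] ∧
      ∀ A B C D, Ψ A B C D = 6 * μ * Sym4 o o ι ι A B C D) := by
  -- reduce Ψ to its five independent components
  obtain ⟨p0, p1, p2, p3, p4, hM⟩ :
      ∃ p0 p1 p2 p3 p4, Ψ = (fun A B C D =>
        ![![![![p0,p1],![p1,p2]],![![p1,p2],![p2,p3]]],
          ![![![p1,p2],![p2,p3]],![![p2,p3],![p3,p4]]]] A B C D) := by
    have c0010 : Ψ 0 0 1 0 = Ψ 0 0 0 1 := (hsym 0 0 1 0).2.2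
    have c0100 : Ψ 0 1 0 0 = Ψ 0 0 0 1 := (hsym 0 1 0 0).2.1.trans c0010
    have c1000 : Ψ 1 0 0 0 = Ψ 0 0 0 1 := (hsym 1 0 0 0).1.trans c0100
    have c0101 : Ψ 0 1 0 1 = Ψ 0 0 1 1 := (hsym 0 1 0 1).2.1
    have c0110 : Ψ 0 1 1 0 = Ψ 0 0 1 1 := (hsym 0 1 1 0).2.2.trans c0101
    have c1001 : Ψ 1 0 0 1 = Ψ 0 0 1 1 := (hsym 1 0 0 1).1.trans c0101
    have c1010 : Ψ 1 0 1 0 = Ψ 0 0 1 1 := (hsym 1 0 1 0).1.trans c0110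
    have c1100 : Ψ 1 1 0 0 = Ψ 0 0 1 1 := (hsym 1 1 0 0).2.1.trans c1010
    have c1011 : Ψ 1 0 1 1 = Ψ 0 1 1 1 := (hsym 1 0 1 1).1
    have c1101 : Ψ 1 1 0 1 = Ψ 0 1 1 1 := (hsym 1 1 0 1).2.1.trans c1011
    have c1110 : Ψ 1 1 1 0 = Ψ 0 1 1 1 := (hsym 1 1 1 0).2.2.trans c1101
    refine ⟨Ψ 0 0 0 0, Ψ 0 0 0 1, Ψ 0 0 1 1, Ψ 0 1 1 1, Ψ 1 1 1 1, ?_⟩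
    funext A B C D
    rcases two01 A with rfl | rfl <;> rcases two01 B with rfl | rfl <;>
      rcases two01 C with rfl | rfl <;> rcases two01 D with rfl | rfl <;>
      simp only [Matrix.cons_val_zero, Matrix.cons_val_one, Matrix.head_cons] <;>
      first
        | rfl
        | exact c0010 | exact c0100 | exact c1000 | exact c0101 | exact c0110
        | exact c1001 | exact c1010 | exact c1100 | exact c1011 | exact c1101
        | exact c1110
  subst hM
  -- the five scalar equations
  have e0 := h 0 0 0 0
  have e1 := h 0 0 0 1
  have e2 := h 0 0 1 1
  have e3 := h 0 1 1 1
  have e4 := h 1 1 1 1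
  rw [symz_expand] at e0 e1 e2 e3 e4
  simp only [Qc_eval, Matrix.cons_val_zero, Matrix.cons_val_one, Matrix.head_cons]
    at e0 e1 e2 e3 e4
  have f0 : p0*p2 - p1^2 = R/24*p0 := by linear_combination (1/24) * e0
  have f1 : p0*p3 - p1*p2 = R/12*p1 := by linear_combination (1/12) * e1
  have f2 : p0*p4 + 2*p1*p3 - 3*p2^2 = R/4*p2 := by linear_combination (1/4) * e2
  have f3 : p1*p4 - p2*p3 = R/12*p3 := by linear_combination (1/12) * e3
  have f4 : p2*p4 - p3^2 = R/24*p4 := by linear_combination (1/24) * e4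
  clear h hsym hne e0 e1 e2 e3 e4
  by_cases hp0 : p0 = 0
  · -- first component vanishes
    have hp1 : p1 = 0 := by
      have h' : p1^2 = 0 := by linear_combination -f0 + (p2 - R/24)*hp0
      exact pow_eq_zero_iff (two_ne_zero) |>.mp h'
    by_cases hp2 : p2 = 0
    · -- p2 = 0 : type N (or contradiction)
      have hRp3 : R * p3 = 0 := by
        linear_combination -12*f3 + 12*p4*hp1 - 12*p3*hp2
      have hp3 : p3 = 0 := by
        by_contra hp3
        have hR : R = 0 := by
          rcases mul_eq_zero.mp hRp3 with h' | h'
          · exact h'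
          · exact absurd h' hp3
        have : p3^2 = 0 := by linear_combination -f4 + p4*hp2 - (p4/24)*hR
        exact hp3 (pow_eq_zero_iff (two_ne_zero) |>.mp this)
      refine Or.inl ⟨![0, 1], p4, ?_⟩
      intro A B C D
      rcases two01 A with rfl | rfl <;> rcases two01 B with rfl | rfl <;>
        rcases two01 C with rfl | rfl <;> rcases two01 D with rfl | rfl <;>
        simp [Matrix.cons_val_zero, Matrix.cons_val_one, Matrix.head_cons, hp0, hp1, hp2, hp3]
    · -- p2 ≠ 0 : type D
      have hfac : p2 * (R + 12*p2) = 0 := by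
        linear_combination -4*f2 + 4*p4*hp0 + 8*p3*hp1
      have hR : R = -12*p2 := by
        rcases mul_eq_zero.mp hfac with h' | h'
        · exact absurd h' hp2
        · linear_combination h'
      have hp4eq : 3*p2*p4 = 2*p3^2 := by
        linear_combination 2*f4 + (p4/12)*hR
      refine Or.inr ⟨![0, 1], ![3*p2, p3], 1/(9*p2), ?_, ?_⟩
      · rw [linearIndependent_fin2]
        constructor
        · intro h'
          have := congrFun h' 0
          simp at this
          exact hp2 this
        · intro a h'
          have h0 := congrFun h' 0
          have h1 := congrFun h' 1
          simp [Matrix.cons_val_zero, Matrix.cons_val_one, Matrix.head_cons] at h0 h1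
          rcases h0 with h0 | h0
          · rw [h0] at h1; simp at h1
          · exact hp2 h0
      · have H0 : p0 = 6 * (1/(9*p2)) *
            symz (fun A B C D => ![(0:ℂ),1] A * ![(0:ℂ),1] B * ![3*p2,p3] C * ![3*p2,p3] D) 0 0 0 0 := by
          rw [symz_expand]
          simp only [Matrix.cons_val_zero, Matrix.cons_val_one, Matrix.head_cons]
          rw [hp0]; ring
        have H1 : p1 = 6 * (1/(9*p2)) *
            symz (fun A B C D => ![(0:ℂ),1] A * ![(0:ℂ),1] B * ![3*p2,p3] C * ![3*p2,p3] D) 0 0 0 1 := by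
          rw [symz_expand]
          simp only [Matrix.cons_val_zero, Matrix.cons_val_one, Matrix.head_cons]
          rw [hp1]; ring
        have H2 : p2 = 6 * (1/(9*p2)) *
            symz (fun A B C D => ![(0:ℂ),1] A * ![(0:ℂ),1] B * ![3*p2,p3] C * ![3*p2,p3] D) 0 0 1 1 := by
          rw [symz_expand]
          simp only [Matrix.cons_val_zero, Matrix.cons_val_one, Matrix.head_cons]
          field_simp
          ring
        have H3 : p3 = 6 * (1/(9*p2)) *
            symz (fun A B C D => ![(0:ℂ),1] A * ![(0:ℂ),1] B * ![3*p2,p3] C * ![3*p2,p3] D) 0 1 1 1 := by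
          rw [symz_expand]
          simp only [Matrix.cons_val_zero, Matrix.cons_val_one, Matrix.head_cons]
          field_simp
          ring
        have H4 : p4 = 6 * (1/(9*p2)) *
            symz (fun A B C D => ![(0:ℂ),1] A * ![(0:ℂ),1] B * ![3*p2,p3] C * ![3*p2,p3] D) 1 1 1 1 := by
          rw [symz_expand]
          simp only [Matrix.cons_val_zero, Matrix.cons_val_one, Matrix.head_cons]
          field_simp
          linear_combination 72 * hp4eq
        intro A B C D
        rcases two01 A with rfl | rfl <;> rcases two01 B with rfl | rfl <;>
          rcases two01 C with rfl | rfl <;> rcases two01 D with rfl | rfl <;>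
          simp only [Sym4, s0010, s0100, s1000, s0101, s0110, s1001, s1010, s1100,
            s1011, s1101, s1110, Matrix.cons_val_zero, Matrix.cons_val_one, Matrix.head_cons] <;>
          first
            | exact H0 | exact H1 | exact H2 | exact H3 | exact H4
  · -- p0 ≠ 0
    have g2 : 24*p0*p2 = R*p0 + 24*p1^2 := by linear_combination 24*f0
    have g3 : 8*p0^2*p3 = R*p0*p1 + 8*p1^3 := by
      linear_combination (8*p0)*f1 + (8*p1)*f0
    have g4 : 64*p0^3*p4 = R^2*p0^2 + 16*R*p0*p1^2 + 64*p1^4 := by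
      linear_combination (64*p0^2)*f2 + (-128*p0*p1)*f1 + (64*p1^2 + 24*p0*R + 192*p0*p2)*f0
    obtain ⟨s, hs⟩ : ∃ s : ℂ, s^2 = -(R*p0)/8 := by
      exact IsAlgClosed.exists_pow_nat_eq (-(R*p0)/8) zero_lt_two
    by_cases hs0 : s = 0
    · -- R = 0 : type N
      have hRp0 : R * p0 = 0 := by linear_combination 8*hs - 8*s*hs0
      have hR0 : R = 0 := by
        rcases mul_eq_zero.mp hRp0 with h' | h'
        · exact h'
        · exact absurd h' hp0
      have q2 : p0*p2 = p1^2 := by linear_combination f0 + (p0/24)*hR0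
      have q3 : p0^2*p3 = p1^3 := by linear_combination p0*f1 + p1*f0 + (p0*p1/8)*hR0
      have q4 : p0^3*p4 = p1^4 := by
        linear_combination (1/64)*g4 + ((R*p0^2)/64 + (p0*p1^2)/4)*hR0
      refine Or.inl ⟨![p0, p1], 1/p0^3, ?_⟩
      have H0 : p0 = 1/p0^3 * (p0*p0*p0*p0) := by rw [div_mul_eq_mul_div, one_mul, eq_div_iff (pow_ne_zero 3 hp0)]; ring
      have H1 : p1 = 1/p0^3 * (p0*p0*p0*p1) := by rw [div_mul_eq_mul_div, one_mul, eq_div_iff (pow_ne_zero 3 hp0)]; ring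
      have H2 : p2 = 1/p0^3 * (p0*p0*p1*p1) := by rw [div_mul_eq_mul_div, one_mul, eq_div_iff (pow_ne_zero 3 hp0)]; linear_combination p0^2*q2
      have H3 : p3 = 1/p0^3 * (p0*p1*p1*p1) := by rw [div_mul_eq_mul_div, one_mul, eq_div_iff (pow_ne_zero 3 hp0)]; linear_combination p0*q3
      have H4 : p4 = 1/p0^3 * (p1*p1*p1*p1) := by rw [div_mul_eq_mul_div, one_mul, eq_div_iff (pow_ne_zero 3 hp0)]; linear_combination q4
      intro A B C D
      rcases two01 A with rfl | rfl <;> rcases two01 B with rfl | rfl <;>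
        rcases two01 C with rfl | rfl <;> rcases two01 D with rfl | rfl <;>
        simp only [Matrix.cons_val_zero, Matrix.cons_val_one, Matrix.head_cons] <;>
        first
          | linear_combination H0 | linear_combination H1 | linear_combination H2
          | linear_combination H3 | linear_combination H4
    · -- s ≠ 0 : type D
      have hs3 : s^3 = (-(R*p0)/8)*s := by linear_combination s*hs
      have hs4 : s^4 = (R*p0/8)^2 := by linear_combination (s^2 - R*p0/8)*hs
      refine Or.inr ⟨![p0, p1 - s], ![p0, p1 + s], 1/(6*p0^3), ?_, ?_⟩
      · rw [linearIndependent_fin2]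
        constructor
        · intro h'
          exact hp0 (by simpa using congrFun h' 0)
        · intro a h'
          have h0 := congrFun h' 0
          have h1 := congrFun h' 1
          simp only [Pi.smul_apply, smul_eq_mul, Matrix.cons_val_zero, Matrix.cons_val_one,
            Matrix.head_cons] at h0 h1
          have ha : a = 1 := mul_right_cancel₀ hp0 (h0.trans (one_mul p0).symm)
          rw [ha, one_mul] at h1
          exact hs0 (by linear_combination (1/2)*h1)
      · have H0 : p0 = 6 * (1/(6*p0^3)) *
            symz (fun A B C D => ![p0, p1 - s] A * ![p0, p1 - s] B * ![p0, p1 + s] C * ![p0, p1 + s] D) 0 0 0 0 := by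
          rw [symz_expand]
          simp only [Matrix.cons_val_zero, Matrix.cons_val_one, Matrix.head_cons]
          field_simp
          ring
        have H1 : p1 = 6 * (1/(6*p0^3)) *
            symz (fun A B C D => ![p0, p1 - s] A * ![p0, p1 - s] B * ![p0, p1 + s] C * ![p0, p1 + s] D) 0 0 0 1 := by
          rw [symz_expand]
          simp only [Matrix.cons_val_zero, Matrix.cons_val_one, Matrix.head_cons]
          field_simp
          ring
        have H2 : p2 = 6 * (1/(6*p0^3)) *
            symz (fun A B C D => ![p0, p1 - s] A * ![p0, p1 - s] B * ![p0, p1 + s] C * ![p0, p1 + s] D) 0 0 1 1 := by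
          have S2 : symz (fun A B C D => ![p0, p1 - s] A * ![p0, p1 - s] B * ![p0, p1 + s] C * ![p0, p1 + s] D) 0 0 1 1
              = p0^2*p1^2 - p0^2*s^2/3 := by
            rw [symz_expand]
            simp only [Matrix.cons_val_zero, Matrix.cons_val_one, Matrix.head_cons]
            ring
          rw [S2, hs]
          rw [show (6:ℂ)*(1/(6*p0^3)) = 1/p0^3 by field_simp, div_mul_eq_mul_div, one_mul,
            eq_div_iff (pow_ne_zero 3 hp0)]
          linear_combination (p0^2/24)*g2
        have H3 : p3 = 6 * (1/(6*p0^3)) *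
            symz (fun A B C D => ![p0, p1 - s] A * ![p0, p1 - s] B * ![p0, p1 + s] C * ![p0, p1 + s] D) 0 1 1 1 := by
          have S3 : symz (fun A B C D => ![p0, p1 - s] A * ![p0, p1 - s] B * ![p0, p1 + s] C * ![p0, p1 + s] D) 0 1 1 1
              = p0*p1*(p1^2 - s^2)/2 + p0*p1*(p1^2 - s^2)/2 := by
            rw [symz_expand]
            simp only [Matrix.cons_val_zero, Matrix.cons_val_one, Matrix.head_cons]
            ring
          rw [S3, hs]
          rw [show (6:ℂ)*(1/(6*p0^3)) = 1/p0^3 by field_simp, div_mul_eq_mul_div, one_mul,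
            eq_div_iff (pow_ne_zero 3 hp0)]
          linear_combination (p0/8)*g3
        have H4 : p4 = 6 * (1/(6*p0^3)) *
            symz (fun A B C D => ![p0, p1 - s] A * ![p0, p1 - s] B * ![p0, p1 + s] C * ![p0, p1 + s] D) 1 1 1 1 := by
          have S4 : symz (fun A B C D => ![p0, p1 - s] A * ![p0, p1 - s] B * ![p0, p1 + s] C * ![p0, p1 + s] D) 1 1 1 1
              = (p1^2 - s^2)^2 := by
            rw [symz_expand]
            simp only [Matrix.cons_val_zero, Matrix.cons_val_one, Matrix.head_cons]
            ring
          rw [S4, hs]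
          rw [show (6:ℂ)*(1/(6*p0^3)) = 1/p0^3 by field_simp, div_mul_eq_mul_div, one_mul,
            eq_div_iff (pow_ne_zero 3 hp0)]
          linear_combination (1/64)*g4
        intro A B C D
        rcases two01 A with rfl | rfl <;> rcases two01 B with rfl | rfl <;>
          rcases two01 C with rfl | rfl <;> rcases two01 D with rfl | rfl <;>
          simp only [Sym4, s0010, s0100, s1000, s0101, s0110, s1001, s1010, s1100,
            s1011, s1101, s1110, Matrix.cons_val_zero, Matrix.cons_val_one, Matrix.head_cons] <;>
          first
            | exact H0 | exact H1 | exact H2 | exact H3 | exact H4
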